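/- Let A be a unital C*-algebra and p, q ∈ A projections. Then Δp := (p − 1) ⊗ p + 1 ⊗ 1 + p ⊗ (p − 1) is a projection in A ⊗ A, and similarly for q. Consequently, if C is the universal unital C*-algebra generated by two projections p, q, there is a unique unital *-homomorphism Δ : C → C ⊗ C with Δ(p) = (p − 1) ⊗ p + 1 ⊗ 1 + p ⊗ (p − 1) and Δ(q) = (q − 1) ⊗ q + 1 ⊗ 1 + q ⊗ (q − 1), and Δ is coassociative. -/
import Mathlib

private lemma idem_mul' {T : Type*} [Ring T] (x y : T) (hx : x * x = x) (hy : y * y = y)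
    (hxy : x * y = y * x) : (x * y) * (x * y) = x * y := by
  calc (x * y) * (x * y) = x * (y * x) * y := by noncomm_ring
    _ = x * (x * y) * y := by rw [hxy]
    _ = (x * x) * (y * y) := by noncomm_ring
    _ = x * y := by rw [hx, hy]

private lemma delta_proj {T : Type*} [Ring T] [StarRing T] (a b : T)
    (ha : IsSelfAdjoint a) (ha2 : a * a = a) (hb : IsSelfAdjoint b) (hb2 : b * b = b)
    (hab : a * b = b * a) :
    IsSelfAdjoint ((a - 1) * b + 1 + a * (b - 1)) ∧
      ((a - 1) * b + 1 + a * (b - 1)) * ((a - 1) * b + 1 + a * (b - 1))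
        = (a - 1) * b + 1 + a * (b - 1) := by
  constructor
  · have h1 : b * (a - 1) = (a - 1) * b := by
      rw [mul_sub, sub_mul, ← hab, mul_one, one_mul]
    have h2 : (b - 1) * a = a * (b - 1) := by
      rw [mul_sub, sub_mul, ← hab, mul_one, one_mul]
    simp only [IsSelfAdjoint, star_add, star_mul, star_sub, star_one, ha.star_eq, hb.star_eq]
    rw [h1, h2]
  · have hexp : (a - 1) * b + 1 + a * (b - 1) = (1 - a) * (1 - b) + a * b := by
      noncomm_ring
    have hcomm' : (1 - a) * (1 - b) = (1 - b) * (1 - a) := by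
      have e1 : (1 - a) * (1 - b) = 1 - a - b + a * b := by noncomm_ring
      have e2 : (1 - b) * (1 - a) = 1 - b - a + b * a := by noncomm_ring
      rw [e1, e2, hab]; abel
    have hia : (1 - a) * (1 - a) = 1 - a := by
      have : (1 - a) * (1 - a) = 1 - a - a + a * a := by noncomm_ring
      rw [this, ha2]; abel
    have hib : (1 - b) * (1 - b) = 1 - b := by
      have : (1 - b) * (1 - b) = 1 - b - b + b * b := by noncomm_ring
      rw [this, hb2]; abel
    have he1 : ((1 - a) * (1 - b)) * ((1 - a) * (1 - b)) = (1 - a) * (1 - b) :=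
      idem_mul' _ _ hia hib hcomm'
    have he2 : (a * b) * (a * b) = a * b := idem_mul' _ _ ha2 hb2 hab
    have hswap : (1 - b) * a = a * (1 - b) := by
      rw [mul_sub, sub_mul, ← hab, mul_one, one_mul]
    have horth1 : ((1 - a) * (1 - b)) * (a * b) = 0 := by
      have : ((1 - a) * (1 - b)) * (a * b) = (1 - a) * ((1 - b) * a) * b := by noncomm_ring
      rw [this, hswap]
      have : (1 - a) * (a * (1 - b)) * b = ((1 - a) * a) * ((1 - b) * b) := by noncomm_ring
      rw [this]
      have z1 : (1 - a) * a = 0 := by rw [sub_mul, one_mul, ha2, sub_self]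
      rw [z1, zero_mul]
    have horth2 : (a * b) * ((1 - a) * (1 - b)) = 0 := by
      have : (a * b) * ((1 - a) * (1 - b)) = a * (b * (1 - a)) * (1 - b) := by noncomm_ring
      rw [this]
      have hswap2 : b * (1 - a) = (1 - a) * b := by rw [mul_sub, sub_mul, ← hab, mul_one, one_mul]
      rw [hswap2]
      have : a * ((1 - a) * b) * (1 - b) = (a * (1 - a)) * (b * (1 - b)) := by noncomm_ring
      rw [this]
      have z1 : a * (1 - a) = 0 := by rw [mul_sub, mul_one, ha2, sub_self]
      rw [z1, zero_mul]
    rw [hexp, add_mul, mul_add, mul_add, he1, he2, horth1, horth2, add_zero, zero_add]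


/-- (1) For projections `p, q` in a unital C*-algebra `A`, the element
`Δp = (p − 1) ⊗ p + 1 ⊗ 1 + p ⊗ (p − 1)` is a projection in `A ⊗ A`.  (2) If `C` is the
universal unital C*-algebra generated by two projections `P, Q` (modeled via its universal
property), there is a unique unital *-homomorphism `Δ : C → C ⊗ C` sending `P` and `Q` to
the corresponding elements, and `Δ` is coassociative.  C*-tensor products are modeled by a
C*-algebra together with unital *-homomorphisms of the factors with commuting ranges
(`x ⊗ y ↦ i₁ x * i₂ y`); coassociativity is the corresponding identity on the generators
in any model of the triple tensor product. -/
theorem stmt_14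
    (A T : Type) [NormedRing A] [StarRing A] [CStarRing A] [NormedAlgebra ℂ A]
    [StarModule ℂ A] [CompleteSpace A]
    [NormedRing T] [StarRing T] [CStarRing T] [NormedAlgebra ℂ T]
    [StarModule ℂ T] [CompleteSpace T]
    (p q : A) (hp : IsSelfAdjoint p ∧ p * p = p) (hq : IsSelfAdjoint q ∧ q * q = q)
    (i₁ i₂ : A →⋆ₐ[ℂ] T) (hcomm : ∀ x y : A, i₁ x * i₂ y = i₂ y * i₁ x)
    (C T₂ T₃ : Type) [NormedRing C] [StarRing C] [CStarRing C] [NormedAlgebra ℂ C]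
    [StarModule ℂ C] [CompleteSpace C]
    [NormedRing T₂] [StarRing T₂] [CStarRing T₂] [NormedAlgebra ℂ T₂]
    [StarModule ℂ T₂] [CompleteSpace T₂]
    [NormedRing T₃] [StarRing T₃] [CStarRing T₃] [NormedAlgebra ℂ T₃]
    [StarModule ℂ T₃] [CompleteSpace T₃]
    (P Q : C) (hP : IsSelfAdjoint P ∧ P * P = P) (hQ : IsSelfAdjoint Q ∧ Q * Q = Q)
    (hUP : ∀ (D : Type) [NormedRing D] [StarRing D] [CStarRing D] [NormedAlgebra ℂ D]
      [StarModule ℂ D] [CompleteSpace D] (a b : D),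
      (IsSelfAdjoint a ∧ a * a = a) → (IsSelfAdjoint b ∧ b * b = b) →
      ∃! φ : C →⋆ₐ[ℂ] D, φ P = a ∧ φ Q = b)
    (j₁ j₂ : C →⋆ₐ[ℂ] T₂) (hjcomm : ∀ x y : C, j₁ x * j₂ y = j₂ y * j₁ x)
    (k₁ k₂ k₃ : C →⋆ₐ[ℂ] T₃)
    (hkcomm₁₂ : ∀ x y : C, k₁ x * k₂ y = k₂ y * k₁ x)
    (hkcomm₁₃ : ∀ x y : C, k₁ x * k₃ y = k₃ y * k₁ x)
    (hkcomm₂₃ : ∀ x y : C, k₂ x * k₃ y = k₃ y * k₂ x) :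
    -- (1) `Δp` and `Δq` are projections in `A ⊗ A`
    (IsSelfAdjoint (i₁ (p - 1) * i₂ p + 1 + i₁ p * i₂ (p - 1)) ∧
     (i₁ (p - 1) * i₂ p + 1 + i₁ p * i₂ (p - 1)) * (i₁ (p - 1) * i₂ p + 1 + i₁ p * i₂ (p - 1))
       = i₁ (p - 1) * i₂ p + 1 + i₁ p * i₂ (p - 1)) ∧
    (IsSelfAdjoint (i₁ (q - 1) * i₂ q + 1 + i₁ q * i₂ (q - 1)) ∧
     (i₁ (q - 1) * i₂ q + 1 + i₁ q * i₂ (q - 1)) * (i₁ (q - 1) * i₂ q + 1 + i₁ q * i₂ (q - 1))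
       = i₁ (q - 1) * i₂ q + 1 + i₁ q * i₂ (q - 1)) ∧
    -- (2) existence and uniqueness of the comultiplication `Δ`
    (∃! Δ : C →⋆ₐ[ℂ] T₂,
      Δ P = j₁ (P - 1) * j₂ P + 1 + j₁ P * j₂ (P - 1) ∧
      Δ Q = j₁ (Q - 1) * j₂ Q + 1 + j₁ Q * j₂ (Q - 1)) ∧
    -- coassociativity of `Δ`, expressed on the generators in the triple tensor model:
    -- `(Δ ⊗ id)(Δ P) = (id ⊗ Δ)(Δ P)` and likewise for `Q`
    (((k₁ (P - 1) * k₂ P + 1 + k₁ P * k₂ (P - 1)) - 1) * k₃ P + 1 +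
        (k₁ (P - 1) * k₂ P + 1 + k₁ P * k₂ (P - 1)) * k₃ (P - 1)
      = k₁ (P - 1) * (k₂ (P - 1) * k₃ P + 1 + k₂ P * k₃ (P - 1)) + 1 +
        k₁ P * ((k₂ (P - 1) * k₃ P + 1 + k₂ P * k₃ (P - 1)) - 1)) ∧
    (((k₁ (Q - 1) * k₂ Q + 1 + k₁ Q * k₂ (Q - 1)) - 1) * k₃ Q + 1 +
        (k₁ (Q - 1) * k₂ Q + 1 + k₁ Q * k₂ (Q - 1)) * k₃ (Q - 1)
      = k₁ (Q - 1) * (k₂ (Q - 1) * k₃ Q + 1 + k₂ Q * k₃ (Q - 1)) + 1 +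
        k₁ Q * ((k₂ (Q - 1) * k₃ Q + 1 + k₂ Q * k₃ (Q - 1)) - 1)) := by
  refine ⟨?_, ?_, ?_, ?_, ?_⟩
  · exact delta_proj (i₁ p) (i₂ p) (hp.1.map i₁) (by rw [← map_mul, hp.2])
      (hp.1.map i₂) (by rw [← map_mul, hp.2]) (hcomm p p)
      |>.imp (by simp [map_sub, map_one]) (by simp [map_sub, map_one])
  · exact delta_proj (i₁ q) (i₂ q) (hq.1.map i₁) (by rw [← map_mul, hq.2])
      (hq.1.map i₂) (by rw [← map_mul, hq.2]) (hcomm q q)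
      |>.imp (by simp [map_sub, map_one]) (by simp [map_sub, map_one])
  · have hPproj := delta_proj (j₁ P) (j₂ P) (hP.1.map j₁) (by rw [← map_mul, hP.2])
      (hP.1.map j₂) (by rw [← map_mul, hP.2]) (hjcomm P P)
    have hQproj := delta_proj (j₁ Q) (j₂ Q) (hQ.1.map j₁) (by rw [← map_mul, hQ.2])
      (hQ.1.map j₂) (by rw [← map_mul, hQ.2]) (hjcomm Q Q)
    have e1 : j₁ (P - 1) * j₂ P + 1 + j₁ P * j₂ (P - 1)
        = (j₁ P - 1) * j₂ P + 1 + j₁ P * (j₂ P - 1) := by simp [map_sub, map_one]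
    have e2 : j₁ (Q - 1) * j₂ Q + 1 + j₁ Q * j₂ (Q - 1)
        = (j₁ Q - 1) * j₂ Q + 1 + j₁ Q * (j₂ Q - 1) := by simp [map_sub, map_one]
    rw [e1, e2]
    exact hUP T₂ _ _ hPproj hQproj
  · simp only [map_sub, map_one]; noncomm_ring
  · simp only [map_sub, map_one]; noncomm_ring
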